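/- (Reverse converter ebn from compact terms to lambda terms.) There is a function which, for every formula F, maps every compact term of the exp-log normal form of F back to a closed intrinsically typed lambda term of type F, i.e., a function ebn : HSc (enf2cnf (enf F)) → ND [] F, where enf2cnf coerces an ENF to a CNF (the identity on cnf c, and con top (bd d) top on dnf d). -/
import Mathlib


namespace ExpLog

-- Formulas (types) generated by atoms, sums, products and arrows.
inductive Formula : Type
  | prop : ℕ → Formula
  | disj : Formula → Formula → Formula
  | conj : Formula → Formula → Formula
  | impl : Formula → Formula → Formula
  deriving Repr
-- Intrinsically typed lambda terms (natural deduction proofs) with de Bruijn indices.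
inductive ND : List Formula → Formula → Type
  | hyp  {Γ A} : ND (A :: Γ) A
  | wkn  {Γ A B} : ND Γ A → ND (B :: Γ) A
  | lam  {Γ A B} : ND (A :: Γ) B → ND Γ (.impl A B)
  | app  {Γ A B} : ND Γ (.impl A B) → ND Γ A → ND Γ B
  | pair {Γ A B} : ND Γ A → ND Γ B → ND Γ (.conj A B)
  | fst  {Γ A B} : ND Γ (.conj A B) → ND Γ A
  | snd  {Γ A B} : ND Γ (.conj A B) → ND Γ B
  | inl  {Γ A B} : ND Γ A → ND Γ (.disj A B)
  | inr  {Γ A B} : ND Γ B → ND Γ (.disj A B)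
  | cas  {Γ A B C} : ND Γ (.disj A B) → ND (A :: Γ) C → ND (B :: Γ) C → ND Γ C
-- The mutually inductive grammar of exp-log normal forms:
-- conjunctive normal forms (CNF), disjunctive normal forms (DNF), and base types.
mutual
inductive CNF : Type
  | top : CNF
  | con : CNF → Base → CNF → CNF
  deriving Repr

inductive DNF : Type
  | two : CNF → CNF → DNF
  | dis : CNF → DNF → DNF
  deriving Repr

inductive Base : Type
  | prp : ℕ → Base
  | bd  : DNF → Base
  deriving Repr
end

/-- Exp-log normal forms: either a CNF or a DNF. -/
inductive ENF : Type
  | cnf : CNF → ENF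
  | dnf : DNF → ENF
  deriving Repr

/-- Flattening of `+`-associativity (auxiliary). -/
def nplus1 : DNF → ENF → DNF
  | .two c c0, .cnf c1 => .dis c (.two c0 c1)
  | .two c c0, .dnf d0 => .dis c (.dis c0 d0)
  | .dis c d0, e2 => .dis c (nplus1 d0 e2)

/-- Flattened n-ary sum of two ENFs. -/
def nplus : ENF → ENF → DNF
  | .cnf a, .cnf c => .two a c
  | .cnf a, .dnf d => .dis a d
  | .dnf b, e2 => nplus1 b e2

/-- Flattened n-ary product of two CNFs. -/
def ntimes : CNF → CNF → CNF
  | .top, c2 => c2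
  | .con c10 d c13, c2 => .con c10 d (ntimes c13 c2)

/-- Distributivity of a CNF over a DNF. -/
def distrib0 : CNF → DNF → ENF
  | c, .two c0 c1 => .dnf (.two (ntimes c c0) (ntimes c c1))
  | c, .dis c0 d0 =>
      .dnf (match distrib0 c d0 with
            | .cnf c1 => .two (ntimes c c0) c1
            | .dnf d1 => .dis (ntimes c c0) d1)

/-- Distributivity of a CNF over an ENF. -/
def distrib1 : CNF → ENF → ENF
  | c, .cnf a => .cnf (ntimes c a)
  | c, .dnf b => distrib0 c b

/-- The exp-log rewriting `b^(c₁+⋯+cₙ) ⇝ b^c₁ ⋯ b^cₙ`. -/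
def explog0 : Base → DNF → CNF
  | b, .two c1 c2 => ntimes (.con c1 b .top) (.con c2 b .top)
  | b, .dis c d3 => ntimes (.con c b .top) (explog0 b d3)

/-- The exp-log rewriting of `b^e` for an ENF exponent `e`. -/
def explog1 : Base → ENF → CNF
  | d, .cnf c => .con c d .top
  | d, .dnf d1 => explog0 d d1

/-- Distributivity of a DNF over an ENF. -/
def distribn : DNF → ENF → ENF
  | .two c c0, e2 => .dnf (nplus (distrib1 c e2) (distrib1 c0 e2))
  | .dis c d0, e2 => .dnf (nplus (distrib1 c e2) (distribn d0 e2))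

/-- Distributivity of an ENF over an ENF. -/
def distrib : ENF → ENF → ENF
  | .cnf a, e2 => distrib1 a e2
  | .dnf b, e2 => distribn b e2

/-- The exp-log rewriting of `c^{e₂}` (pointwise currying). -/
def explogn : CNF → ENF → CNF
  | .top, _ => .top
  | .con c1 d c2, e2 => ntimes (explog1 d (distrib1 c1 e2)) (explogn c2 e2)

/-- The CNF corresponding to an atomic type: `(1→p)×1`, identified with `p`. -/
def p2c (p : ℕ) : CNF := .con .top (.prp p) .top

def b2c : Base → CNF
  | .prp p => p2c p
  | .bd d => .con .top (.bd d) .top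

/-- Coercion of an ENF to a CNF. -/
def enf2cnf : ENF → CNF
  | .cnf c => c
  | .dnf d => b2c (.bd d)
/-- The structurally recursive exp-log normalization of a formula. -/
def enf : Formula → ENF
  | .prop p => .cnf (p2c p)
  | .disj f0 f1 => .dnf (nplus (enf f0) (enf f1))
  | .conj f0 f1 => distrib (enf f0) (enf f1)
  | .impl f0 f1 => .cnf (explogn (enf2cnf (enf f1)) (enf f0))
-- The intrinsically typed compact terms: HSc (at product/CNF type) and HSb (at base type).
mutual
inductive HSc : CNF → Type
  | tt : HSc .top
  | pair {c1 b c2} : HSb c1 b → HSc c2 → HSc (.con c1 b c2)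

inductive HSb : CNF → Base → Type
  | app {p c0 c1 c2} :
      HSc (explogn c1 (.cnf (ntimes c2 (.con c1 (.prp p) c0)))) →
      HSb (ntimes c2 (.con c1 (.prp p) c0)) (.prp p)
  | cas {d b c0 c1 c2 c3} :
      HSc (explogn c1 (.cnf (ntimes c2 (.con c1 (.bd d) c0)))) →
      HSc (explogn (explog0 b d) (.cnf (ntimes c3 (ntimes c2 (.con c1 (.bd d) c0))))) →
      HSb (ntimes c3 (ntimes c2 (.con c1 (.bd d) c0))) b
  | wkn {c0 c1 b1 b} : HSb c0 b → HSb (.con c1 b1 c0) b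
  | inl_two {c0 c1 c2} : HSc (explogn c1 (.cnf c0)) → HSb c0 (.bd (.two c1 c2))
  | inr_two {c0 c1 c2} : HSc (explogn c2 (.cnf c0)) → HSb c0 (.bd (.two c1 c2))
  | inl_dis {c0 c d} : HSc (explogn c (.cnf c0)) → HSb c0 (.bd (.dis c d))
  | inr_dis {c0 c d} : HSb c0 (.bd d) → HSb c0 (.bd (.dis c d))
end

/-! ### Auxiliary machinery for `ebn_exists` -/

/-- Derivability (mere existence of a term). -/
abbrev Thm (Γ : List Formula) (A : Formula) : Prop := Nonempty (ND Γ A)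

namespace Thm
theorem hyp {Γ A} : Thm (A::Γ) A := ⟨.hyp⟩
theorem wkn {Γ A B} (h : Thm Γ A) : Thm (B::Γ) A := h.elim fun t => ⟨.wkn t⟩
theorem lam {Γ A B} (h : Thm (A::Γ) B) : Thm Γ (.impl A B) := h.elim fun t => ⟨.lam t⟩
theorem app {Γ A B} (f : Thm Γ (.impl A B)) (a : Thm Γ A) : Thm Γ B :=
  f.elim fun f => a.elim fun a => ⟨.app f a⟩
theorem pair {Γ A B} (a : Thm Γ A) (b : Thm Γ B) : Thm Γ (.conj A B) :=
  a.elim fun a => b.elim fun b => ⟨.pair a b⟩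
theorem fst {Γ A B} (h : Thm Γ (.conj A B)) : Thm Γ A := h.elim fun t => ⟨.fst t⟩
theorem snd {Γ A B} (h : Thm Γ (.conj A B)) : Thm Γ B := h.elim fun t => ⟨.snd t⟩
theorem inl {Γ A B} (h : Thm Γ A) : Thm Γ (.disj A B) := h.elim fun t => ⟨.inl t⟩
theorem inr {Γ A B} (h : Thm Γ B) : Thm Γ (.disj A B) := h.elim fun t => ⟨.inr t⟩
theorem cas {Γ A B C} (h : Thm Γ (.disj A B)) (l : Thm (A::Γ) C) (r : Thm (B::Γ) C) :
    Thm Γ C := h.elim fun h => l.elim fun l => r.elim fun r => ⟨.cas h l r⟩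
theorem comp {Γ A B C} (f : Thm Γ (.impl A B)) (g : Thm Γ (.impl B C)) :
    Thm Γ (.impl A C) := lam (app (wkn g) (app (wkn f) hyp))
theorem idI {Γ A} : Thm Γ (.impl A A) := lam hyp
end Thm

/-- A fixed provable formula serving as the unit. -/
def U : Formula := .impl (.prop 0) (.prop 0)

theorem uI {Γ} : Thm Γ U := Thm.lam Thm.hyp

mutual
/-- Interpretation of a CNF back as a formula. -/
def c2f : CNF → Formula
  | .top => U
  | .con c1 b c2 => .conj (.impl (c2f c1) (b2f b)) (c2f c2)
def b2f : Base → Formula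
  | .prp p => .prop p
  | .bd d => d2f d
def d2f : DNF → Formula
  | .two c1 c2 => .disj (c2f c1) (c2f c2)
  | .dis c d => .disj (c2f c) (d2f d)
end

def e2f : ENF → Formula
  | .cnf c => c2f c
  | .dnf d => d2f d

/-! #### `ntimes` -/

theorem ntimes_fst : ∀ (a b : CNF) {Γ}, Thm Γ ((c2f (ntimes a b)).impl (c2f a))
  | .top, b, Γ => Thm.lam uI
  | .con c1 d c2, b, Γ =>
      Thm.lam (Thm.pair (Thm.fst Thm.hyp) (Thm.app (ntimes_fst c2 b) (Thm.snd Thm.hyp)))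

theorem ntimes_snd : ∀ (a b : CNF) {Γ}, Thm Γ ((c2f (ntimes a b)).impl (c2f b))
  | .top, b, Γ => Thm.idI
  | .con c1 d c2, b, Γ => Thm.lam (Thm.app (ntimes_snd c2 b) (Thm.snd Thm.hyp))

theorem ntimes_pair :
    ∀ (a b : CNF) {Γ}, Thm Γ ((c2f a).impl ((c2f b).impl (c2f (ntimes a b))))
  | .top, b, Γ => Thm.lam Thm.idI
  | .con c1 d c2, b, Γ =>
      Thm.lam (Thm.lam (Thm.pair (Thm.fst (Thm.wkn Thm.hyp))
        (Thm.app (Thm.app (ntimes_pair c2 b) (Thm.snd (Thm.wkn Thm.hyp))) Thm.hyp)))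

/-! #### `nplus1` / `nplus` -/

theorem nplus1_inl : ∀ (d : DNF) (e : ENF) {Γ}, Thm Γ ((d2f d).impl (d2f (nplus1 d e)))
  | .two c c0, .cnf c1, Γ =>
      Thm.lam (Thm.cas Thm.hyp (Thm.inl Thm.hyp) (Thm.inr (Thm.inl Thm.hyp)))
  | .two c c0, .dnf d0, Γ =>
      Thm.lam (Thm.cas Thm.hyp (Thm.inl Thm.hyp) (Thm.inr (Thm.inl Thm.hyp)))
  | .dis c d0, e2, Γ =>
      Thm.lam (Thm.cas Thm.hyp (Thm.inl Thm.hyp)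
        (Thm.inr (Thm.app (nplus1_inl d0 e2) Thm.hyp)))

theorem nplus1_inr : ∀ (d : DNF) (e : ENF) {Γ}, Thm Γ ((e2f e).impl (d2f (nplus1 d e)))
  | .two c c0, .cnf c1, Γ => Thm.lam (Thm.inr (Thm.inr Thm.hyp))
  | .two c c0, .dnf d0, Γ => Thm.lam (Thm.inr (Thm.inr Thm.hyp))
  | .dis c d0, e2, Γ => Thm.lam (Thm.inr (Thm.app (nplus1_inr d0 e2) Thm.hyp))

theorem nplus1_elim : ∀ (d : DNF) (e : ENF) {Γ C},
    Thm Γ ((d2f d).impl C) → Thm Γ ((e2f e).impl C) → Thm Γ ((d2f (nplus1 d e)).impl C)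
  | .two c c0, .cnf c1, Γ, C, f, g =>
      Thm.lam (Thm.cas Thm.hyp
        (Thm.app (Thm.wkn (Thm.wkn f)) (Thm.inl Thm.hyp))
        (Thm.cas Thm.hyp
          (Thm.app (Thm.wkn (Thm.wkn (Thm.wkn f))) (Thm.inr Thm.hyp))
          (Thm.app (Thm.wkn (Thm.wkn (Thm.wkn g))) Thm.hyp)))
  | .two c c0, .dnf d0, Γ, C, f, g =>
      Thm.lam (Thm.cas Thm.hyp
        (Thm.app (Thm.wkn (Thm.wkn f)) (Thm.inl Thm.hyp))
        (Thm.cas Thm.hyp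
          (Thm.app (Thm.wkn (Thm.wkn (Thm.wkn f))) (Thm.inr Thm.hyp))
          (Thm.app (Thm.wkn (Thm.wkn (Thm.wkn g))) Thm.hyp)))
  | .dis c d0, e2, Γ, C, f, g =>
      Thm.lam (Thm.cas Thm.hyp
        (Thm.app (Thm.wkn (Thm.wkn f)) (Thm.inl Thm.hyp))
        (Thm.app (nplus1_elim d0 e2
            (Thm.comp (Thm.lam (Thm.inr Thm.hyp)) (Thm.wkn (Thm.wkn f)))
            (Thm.wkn (Thm.wkn g))) Thm.hyp))

theorem nplus_inl : ∀ (e1 e2 : ENF) {Γ}, Thm Γ ((e2f e1).impl (d2f (nplus e1 e2)))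
  | .cnf a, .cnf c, Γ => Thm.lam (Thm.inl Thm.hyp)
  | .cnf a, .dnf d, Γ => Thm.lam (Thm.inl Thm.hyp)
  | .dnf b, e2, Γ => nplus1_inl b e2

theorem nplus_inr : ∀ (e1 e2 : ENF) {Γ}, Thm Γ ((e2f e2).impl (d2f (nplus e1 e2)))
  | .cnf a, .cnf c, Γ => Thm.lam (Thm.inr Thm.hyp)
  | .cnf a, .dnf d, Γ => Thm.lam (Thm.inr Thm.hyp)
  | .dnf b, e2, Γ => nplus1_inr b e2

theorem nplus_elim : ∀ (e1 e2 : ENF) {Γ C},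
    Thm Γ ((e2f e1).impl C) → Thm Γ ((e2f e2).impl C) → Thm Γ ((d2f (nplus e1 e2)).impl C)
  | .cnf a, .cnf c, Γ, C, f, g =>
      Thm.lam (Thm.cas Thm.hyp (Thm.app (Thm.wkn (Thm.wkn f)) Thm.hyp)
        (Thm.app (Thm.wkn (Thm.wkn g)) Thm.hyp))
  | .cnf a, .dnf d, Γ, C, f, g =>
      Thm.lam (Thm.cas Thm.hyp (Thm.app (Thm.wkn (Thm.wkn f)) Thm.hyp)
        (Thm.app (Thm.wkn (Thm.wkn g)) Thm.hyp))
  | .dnf b, e2, Γ, C, f, g => nplus1_elim b e2 f g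

/-! #### `distrib0` / `distrib1` / `distribn` / `distrib` -/

theorem distrib0_intro : ∀ (c : CNF) (d : DNF) {Γ},
    Thm Γ ((c2f c).impl ((d2f d).impl (e2f (distrib0 c d))))
  | c, .two c0 c1, Γ =>
      Thm.lam (Thm.lam (Thm.cas Thm.hyp
        (Thm.inl (Thm.app (Thm.app (ntimes_pair c c0)
          (Thm.wkn (Thm.wkn Thm.hyp))) Thm.hyp))
        (Thm.inr (Thm.app (Thm.app (ntimes_pair c c1)
          (Thm.wkn (Thm.wkn Thm.hyp))) Thm.hyp))))
  | c, .dis c0 d0, Γ => by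
      have left : ∀ {Γ'}, Thm (c2f c0 :: d2f (.dis c0 d0) :: c2f c :: Γ')
          (c2f (ntimes c c0)) :=
        Thm.app (Thm.app (ntimes_pair c c0) (Thm.wkn (Thm.wkn Thm.hyp))) Thm.hyp
      have ih : Thm (d2f d0 :: d2f (.dis c0 d0) :: c2f c :: Γ) (e2f (distrib0 c d0)) :=
        Thm.app (Thm.app (distrib0_intro c d0) (Thm.wkn (Thm.wkn Thm.hyp))) Thm.hyp
      rcases h : distrib0 c d0 with c1 | d1
      · rw [h] at ih
        show Thm Γ ((c2f c).impl ((d2f (.dis c0 d0)).impl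
          (e2f (.dnf (match distrib0 c d0 with
            | .cnf c1 => .two (ntimes c c0) c1
            | .dnf d1 => .dis (ntimes c c0) d1)))))
        rw [h]
        exact Thm.lam (Thm.lam (Thm.cas Thm.hyp (Thm.inl left) (Thm.inr ih)))
      · rw [h] at ih
        show Thm Γ ((c2f c).impl ((d2f (.dis c0 d0)).impl
          (e2f (.dnf (match distrib0 c d0 with
            | .cnf c1 => .two (ntimes c c0) c1
            | .dnf d1 => .dis (ntimes c c0) d1)))))
        rw [h]
        exact Thm.lam (Thm.lam (Thm.cas Thm.hyp (Thm.inl left) (Thm.inr ih)))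

theorem distrib0_fst : ∀ (c : CNF) (d : DNF) {Γ},
    Thm Γ ((e2f (distrib0 c d)).impl (c2f c))
  | c, .two c0 c1, Γ =>
      Thm.lam (Thm.cas Thm.hyp (Thm.app (ntimes_fst c c0) Thm.hyp)
        (Thm.app (ntimes_fst c c1) Thm.hyp))
  | c, .dis c0 d0, Γ => by
      have ih : ∀ {Γ'}, Thm Γ' ((e2f (distrib0 c d0)).impl (c2f c)) :=
        distrib0_fst c d0
      show Thm Γ ((e2f (.dnf (match distrib0 c d0 with
            | .cnf c1 => .two (ntimes c c0) c1
            | .dnf d1 => .dis (ntimes c c0) d1))).impl (c2f c))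
      rcases h : distrib0 c d0 with c1 | d1 <;> rw [h] at ih <;>
      exact Thm.lam (Thm.cas Thm.hyp (Thm.app (ntimes_fst c c0) Thm.hyp)
        (Thm.app ih Thm.hyp))

theorem distrib0_snd : ∀ (c : CNF) (d : DNF) {Γ},
    Thm Γ ((e2f (distrib0 c d)).impl (d2f d))
  | c, .two c0 c1, Γ =>
      Thm.lam (Thm.cas Thm.hyp (Thm.inl (Thm.app (ntimes_snd c c0) Thm.hyp))
        (Thm.inr (Thm.app (ntimes_snd c c1) Thm.hyp)))
  | c, .dis c0 d0, Γ => by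
      have ih : ∀ {Γ'}, Thm Γ' ((e2f (distrib0 c d0)).impl (d2f d0)) :=
        distrib0_snd c d0
      show Thm Γ ((e2f (.dnf (match distrib0 c d0 with
            | .cnf c1 => .two (ntimes c c0) c1
            | .dnf d1 => .dis (ntimes c c0) d1))).impl (d2f (.dis c0 d0)))
      rcases h : distrib0 c d0 with c1 | d1 <;> rw [h] at ih <;>
      exact Thm.lam (Thm.cas Thm.hyp (Thm.inl (Thm.app (ntimes_snd c c0) Thm.hyp))
        (Thm.inr (Thm.app ih Thm.hyp)))

theorem distrib1_intro : ∀ (c : CNF) (e : ENF) {Γ},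
    Thm Γ ((c2f c).impl ((e2f e).impl (e2f (distrib1 c e))))
  | c, .cnf a, _ => ntimes_pair c a
  | c, .dnf b, _ => distrib0_intro c b

theorem distrib1_fst : ∀ (c : CNF) (e : ENF) {Γ},
    Thm Γ ((e2f (distrib1 c e)).impl (c2f c))
  | c, .cnf a, _ => ntimes_fst c a
  | c, .dnf b, _ => distrib0_fst c b

theorem distrib1_snd : ∀ (c : CNF) (e : ENF) {Γ},
    Thm Γ ((e2f (distrib1 c e)).impl (e2f e))
  | c, .cnf a, _ => ntimes_snd c a
  | c, .dnf b, _ => distrib0_snd c b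

theorem distribn_intro : ∀ (b : DNF) (e : ENF) {Γ},
    Thm Γ ((d2f b).impl ((e2f e).impl (e2f (distribn b e))))
  | .two c c0, e, Γ =>
      Thm.lam (Thm.lam (Thm.cas (Thm.wkn Thm.hyp)
        (Thm.app (nplus_inl (distrib1 c e) (distrib1 c0 e))
          (Thm.app (Thm.app (distrib1_intro c e) Thm.hyp) (Thm.wkn Thm.hyp)))
        (Thm.app (nplus_inr (distrib1 c e) (distrib1 c0 e))
          (Thm.app (Thm.app (distrib1_intro c0 e) Thm.hyp) (Thm.wkn Thm.hyp)))))
  | .dis c d0, e, Γ =>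
      Thm.lam (Thm.lam (Thm.cas (Thm.wkn Thm.hyp)
        (Thm.app (nplus_inl (distrib1 c e) (distribn d0 e))
          (Thm.app (Thm.app (distrib1_intro c e) Thm.hyp) (Thm.wkn Thm.hyp)))
        (Thm.app (nplus_inr (distrib1 c e) (distribn d0 e))
          (Thm.app (Thm.app (distribn_intro d0 e) Thm.hyp) (Thm.wkn Thm.hyp)))))

theorem distribn_fst : ∀ (b : DNF) (e : ENF) {Γ},
    Thm Γ ((e2f (distribn b e)).impl (d2f b))
  | .two c c0, e, Γ =>
      nplus_elim (distrib1 c e) (distrib1 c0 e)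
        (Thm.comp (distrib1_fst c e) (Thm.lam (Thm.inl Thm.hyp)))
        (Thm.comp (distrib1_fst c0 e) (Thm.lam (Thm.inr Thm.hyp)))
  | .dis c d0, e, Γ =>
      nplus_elim (distrib1 c e) (distribn d0 e)
        (Thm.comp (distrib1_fst c e) (Thm.lam (Thm.inl Thm.hyp)))
        (Thm.comp (distribn_fst d0 e) (Thm.lam (Thm.inr Thm.hyp)))

theorem distribn_snd : ∀ (b : DNF) (e : ENF) {Γ},
    Thm Γ ((e2f (distribn b e)).impl (e2f e))
  | .two c c0, e, Γ =>
      nplus_elim (distrib1 c e) (distrib1 c0 e) (distrib1_snd c e) (distrib1_snd c0 e)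
  | .dis c d0, e, Γ =>
      nplus_elim (distrib1 c e) (distribn d0 e) (distrib1_snd c e) (distribn_snd d0 e)

theorem distrib_intro : ∀ (e1 e2 : ENF) {Γ},
    Thm Γ ((e2f e1).impl ((e2f e2).impl (e2f (distrib e1 e2))))
  | .cnf a, e2, _ => distrib1_intro a e2
  | .dnf b, e2, _ => distribn_intro b e2

theorem distrib_fst : ∀ (e1 e2 : ENF) {Γ},
    Thm Γ ((e2f (distrib e1 e2)).impl (e2f e1))
  | .cnf a, e2, _ => distrib1_fst a e2
  | .dnf b, e2, _ => distribn_fst b e2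

theorem distrib_snd : ∀ (e1 e2 : ENF) {Γ},
    Thm Γ ((e2f (distrib e1 e2)).impl (e2f e2))
  | .cnf a, e2, _ => distrib1_snd a e2
  | .dnf b, e2, _ => distribn_snd b e2

/-! #### `explog0` / `explog1` / `explogn` -/

theorem explog0_intro : ∀ (b : Base) (d : DNF) {Γ},
    Thm Γ (((d2f d).impl (b2f b)).impl (c2f (explog0 b d)))
  | b, .two c1 c2, Γ =>
      Thm.lam (Thm.app (Thm.app (ntimes_pair (.con c1 b .top) (.con c2 b .top))
        (Thm.pair (Thm.lam (Thm.app (Thm.wkn Thm.hyp) (Thm.inl Thm.hyp))) uI))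
        (Thm.pair (Thm.lam (Thm.app (Thm.wkn Thm.hyp) (Thm.inr Thm.hyp))) uI))
  | b, .dis c d3, Γ =>
      Thm.lam (Thm.app (Thm.app (ntimes_pair (.con c b .top) (explog0 b d3))
        (Thm.pair (Thm.lam (Thm.app (Thm.wkn Thm.hyp) (Thm.inl Thm.hyp))) uI))
        (Thm.app (explog0_intro b d3)
          (Thm.comp (Thm.lam (Thm.inr Thm.hyp)) Thm.hyp)))

theorem explog0_app : ∀ (b : Base) (d : DNF) {Γ},
    Thm Γ ((c2f (explog0 b d)).impl ((d2f d).impl (b2f b)))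
  | b, .two c1 c2, Γ =>
      Thm.lam (Thm.lam (Thm.cas Thm.hyp
        (Thm.app (Thm.fst (Thm.app (ntimes_fst (.con c1 b .top) (.con c2 b .top))
          (Thm.wkn (Thm.wkn Thm.hyp)))) Thm.hyp)
        (Thm.app (Thm.fst (Thm.app (ntimes_snd (.con c1 b .top) (.con c2 b .top))
          (Thm.wkn (Thm.wkn Thm.hyp)))) Thm.hyp)))
  | b, .dis c d3, Γ =>
      Thm.lam (Thm.lam (Thm.cas Thm.hyp
        (Thm.app (Thm.fst (Thm.app (ntimes_fst (.con c b .top) (explog0 b d3))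
          (Thm.wkn (Thm.wkn Thm.hyp)))) Thm.hyp)
        (Thm.app (Thm.app (explog0_app b d3)
          (Thm.app (ntimes_snd (.con c b .top) (explog0 b d3))
            (Thm.wkn (Thm.wkn Thm.hyp)))) Thm.hyp)))

theorem explog1_intro : ∀ (b : Base) (e : ENF) {Γ},
    Thm Γ (((e2f e).impl (b2f b)).impl (c2f (explog1 b e)))
  | b, .cnf c, Γ => Thm.lam (Thm.pair Thm.hyp uI)
  | b, .dnf d1, Γ => explog0_intro b d1

theorem explog1_app : ∀ (b : Base) (e : ENF) {Γ},
    Thm Γ ((c2f (explog1 b e)).impl ((e2f e).impl (b2f b)))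
  | b, .cnf c, Γ => Thm.lam (Thm.fst Thm.hyp)
  | b, .dnf d1, Γ => explog0_app b d1

theorem explogn_intro : ∀ (c : CNF) (e : ENF) {Γ},
    Thm Γ (((e2f e).impl (c2f c)).impl (c2f (explogn c e)))
  | .top, e, Γ => Thm.lam uI
  | .con c1 d c2, e, Γ =>
      Thm.lam (Thm.app
        (Thm.app (ntimes_pair (explog1 d (distrib1 c1 e)) (explogn c2 e))
          (Thm.app (explog1_intro d (distrib1 c1 e))
            (Thm.lam (Thm.app
              (Thm.fst (Thm.app (Thm.wkn Thm.hyp)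
                (Thm.app (distrib1_snd c1 e) Thm.hyp)))
              (Thm.app (distrib1_fst c1 e) Thm.hyp)))))
        (Thm.app (explogn_intro c2 e)
          (Thm.comp Thm.hyp (Thm.lam (Thm.snd Thm.hyp)))))

theorem explogn_app : ∀ (c : CNF) (e : ENF) {Γ},
    Thm Γ ((c2f (explogn c e)).impl ((e2f e).impl (c2f c)))
  | .top, e, Γ => Thm.lam (Thm.lam uI)
  | .con c1 d c2, e, Γ =>
      Thm.lam (Thm.lam (Thm.pair
        (Thm.lam (Thm.app
          (Thm.app (explog1_app d (distrib1 c1 e))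
            (Thm.app (ntimes_fst (explog1 d (distrib1 c1 e)) (explogn c2 e))
              (Thm.wkn (Thm.wkn Thm.hyp))))
          (Thm.app (Thm.app (distrib1_intro c1 e) Thm.hyp) (Thm.wkn Thm.hyp))))
        (Thm.app (Thm.app (explogn_app c2 e)
          (Thm.app (ntimes_snd (explog1 d (distrib1 c1 e)) (explogn c2 e))
            (Thm.wkn Thm.hyp))) Thm.hyp)))

/-! #### Coercion `enf2cnf` -/

theorem e2c_to : ∀ (e : ENF) {Γ}, Thm Γ ((e2f e).impl (c2f (enf2cnf e)))
  | .cnf c, Γ => Thm.idI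
  | .dnf d, Γ => Thm.lam (Thm.pair (Thm.lam (Thm.wkn Thm.hyp)) uI)

theorem e2c_from : ∀ (e : ENF) {Γ}, Thm Γ ((c2f (enf2cnf e)).impl (e2f e))
  | .cnf c, Γ => Thm.idI
  | .dnf d, Γ => Thm.lam (Thm.app (Thm.fst Thm.hyp) uI)

/-! #### Main equivalence: `F` is interderivable with its exp-log normal form. -/

theorem enf_equiv : ∀ (F : Formula),
    (∀ {Γ}, Thm Γ (F.impl (e2f (enf F)))) ∧ (∀ {Γ}, Thm Γ ((e2f (enf F)).impl F))
  | .prop p =>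
      ⟨Thm.lam (Thm.pair (Thm.lam (Thm.wkn Thm.hyp)) uI),
       Thm.lam (Thm.app (Thm.fst Thm.hyp) uI)⟩
  | .disj f0 f1 =>
      have ih0 := enf_equiv f0
      have ih1 := enf_equiv f1
      ⟨Thm.lam (Thm.cas Thm.hyp
          (Thm.app (nplus_inl (enf f0) (enf f1)) (Thm.app ih0.1 Thm.hyp))
          (Thm.app (nplus_inr (enf f0) (enf f1)) (Thm.app ih1.1 Thm.hyp))),
       nplus_elim (enf f0) (enf f1)
          (Thm.comp ih0.2 (Thm.lam (Thm.inl Thm.hyp)))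
          (Thm.comp ih1.2 (Thm.lam (Thm.inr Thm.hyp)))⟩
  | .conj f0 f1 =>
      have ih0 := enf_equiv f0
      have ih1 := enf_equiv f1
      ⟨Thm.lam (Thm.app
          (Thm.app (distrib_intro (enf f0) (enf f1))
            (Thm.app ih0.1 (Thm.fst Thm.hyp)))
          (Thm.app ih1.1 (Thm.snd Thm.hyp))),
       Thm.lam (Thm.pair
          (Thm.app ih0.2 (Thm.app (distrib_fst (enf f0) (enf f1)) Thm.hyp))
          (Thm.app ih1.2 (Thm.app (distrib_snd (enf f0) (enf f1)) Thm.hyp)))⟩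
  | .impl f0 f1 =>
      have ih0 := enf_equiv f0
      have ih1 := enf_equiv f1
      ⟨Thm.lam (Thm.app (explogn_intro (enf2cnf (enf f1)) (enf f0))
          (Thm.comp (Thm.comp ih0.2 Thm.hyp)
            (Thm.comp ih1.1 (e2c_to (enf f1))))),
       Thm.lam (Thm.lam
          (Thm.app ih1.2 (Thm.app (e2c_from (enf f1))
            (Thm.app (Thm.app (explogn_app (enf2cnf (enf f1)) (enf f0))
                (Thm.wkn Thm.hyp))
              (Thm.app ih0.1 Thm.hyp)))))⟩

/-! #### Soundness of compact terms -/

mutual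
theorem sound_c : ∀ {c : CNF}, HSc c → Thm [] (c2f c)
  | _, .tt => uI
  | _, .pair hb hc => Thm.pair (sound_b hb) (sound_c hc)

theorem sound_b : ∀ {c : CNF} {b : Base}, HSb c b → Thm [] ((c2f c).impl (b2f b))
  | _, _, .app (p := p) (c0 := c0) (c1 := c1) (c2 := c2) t =>
      Thm.lam (Thm.app
        (Thm.fst (Thm.app (ntimes_snd c2 (.con c1 (.prp p) c0)) Thm.hyp))
        (Thm.app (Thm.app (explogn_app c1 (.cnf (ntimes c2 (.con c1 (.prp p) c0))))
            (Thm.wkn (sound_c t))) Thm.hyp))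
  | _, _, .cas (d := d) (b := b) (c0 := c0) (c1 := c1) (c2 := c2) (c3 := c3) t1 t2 =>
      Thm.lam (Thm.app
        (Thm.app (explog0_app b d)
          (Thm.app (Thm.app
              (explogn_app (explog0 b d)
                (.cnf (ntimes c3 (ntimes c2 (.con c1 (.bd d) c0)))))
              (Thm.wkn (sound_c t2))) Thm.hyp))
        (Thm.app
          (Thm.fst (Thm.app (ntimes_snd c2 (.con c1 (.bd d) c0))
            (Thm.app (ntimes_snd c3 (ntimes c2 (.con c1 (.bd d) c0))) Thm.hyp)))
          (Thm.app (Thm.app (explogn_app c1 (.cnf (ntimes c2 (.con c1 (.bd d) c0))))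
              (Thm.wkn (sound_c t1)))
            (Thm.app (ntimes_snd c3 (ntimes c2 (.con c1 (.bd d) c0))) Thm.hyp))))
  | _, _, .wkn h =>
      Thm.lam (Thm.app (Thm.wkn (sound_b h)) (Thm.snd Thm.hyp))
  | _, _, .inl_two (c0 := c0) (c1 := c1) t =>
      Thm.lam (Thm.inl (Thm.app (Thm.app (explogn_app c1 (.cnf c0))
        (Thm.wkn (sound_c t))) Thm.hyp))
  | _, _, .inr_two (c0 := c0) (c2 := c2) t =>
      Thm.lam (Thm.inr (Thm.app (Thm.app (explogn_app c2 (.cnf c0))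
        (Thm.wkn (sound_c t))) Thm.hyp))
  | _, _, .inl_dis (c0 := c0) (c := c) t =>
      Thm.lam (Thm.inl (Thm.app (Thm.app (explogn_app c (.cnf c0))
        (Thm.wkn (sound_c t))) Thm.hyp))
  | _, _, .inr_dis h =>
      Thm.lam (Thm.inr (Thm.app (Thm.wkn (sound_b h)) Thm.hyp))
end

/-- The reverse converter `ebn`: every compact term at the
exp-log normal form of `F` can be mapped back to a closed lambda term of
type `F`. -/
theorem ebn_exists :
    Nonempty (∀ F : Formula, HSc (enf2cnf (enf F)) → ND [] F) := by
  have main : ∀ F : Formula, HSc (enf2cnf (enf F)) → Nonempty (ND [] F) := by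
    intro F t
    exact Thm.app (enf_equiv F).2 (Thm.app (e2c_from (enf F)) (sound_c t))
  exact ⟨fun F t => Classical.choice (main F t)⟩

end ExpLog
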